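/- Let Φ be a Leonard system with eigenvalue sequence θ_0, …, θ_d, and let c_1, …, c_d be the subdiagonal entries of the matrix representing A with respect to a Φ-standard basis. Then (θ_0 − θ_1)(θ_0 − θ_2)⋯(θ_0 − θ_d) = ν c_1 c_2 ⋯ c_d, where ν = tr(E_0 E*_0)^{-1}. -/

import Mathlib

open Matrix Polynomial

def IsTridiag {K : Type*} [Field K] {n : ℕ} (M : Matrix (Fin n) (Fin n) K) : Prop :=
  ∀ i j : Fin n, ((i : ℕ) + 1 < j ∨ (j : ℕ) + 1 < i) → M i j = 0

def IsIrredTridiag {K : Type*} [Field K] {n : ℕ} (M : Matrix (Fin n) (Fin n) K) : Prop :=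
  IsTridiag M ∧ ∀ i j : Fin n, ((i : ℕ) + 1 = j ∨ (j : ℕ) + 1 = i) → M i j ≠ 0

/-- Entry of a matrix with natural-number indices; `0` when out of range. -/
def mentry {K : Type*} [Field K] {n : ℕ} (M : Matrix (Fin n) (Fin n) K) (i j : ℕ) : K :=
  if h : i < n ∧ j < n then M ⟨i, h.1⟩ ⟨j, h.2⟩ else 0

/-- A family indexed by `Fin (d+1)` viewed as indexed by `ℕ`, with value `0` out of range. -/
def natIdx {d : ℕ} {M : Type*} [Zero M] (E : Fin (d+1) → M) (n : ℕ) : M :=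
  if h : n < d + 1 then E ⟨n, h⟩ else 0

/-- A Leonard system of diameter `d` in the matrix algebra `Mat_{d+1}(K)`:
`A`, `As` are multiplicity-free with eigenvalues `θ i`, `θs i` and primitive
idempotents `E i`, `Es i`, satisfying the tridiagonal conditions. -/
structure LeonardSystem (K : Type*) [Field K] (d : ℕ) where
  A : Matrix (Fin (d+1)) (Fin (d+1)) K
  As : Matrix (Fin (d+1)) (Fin (d+1)) K
  E : Fin (d+1) → Matrix (Fin (d+1)) (Fin (d+1)) K
  Es : Fin (d+1) → Matrix (Fin (d+1)) (Fin (d+1)) K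
  θ : Fin (d+1) → K
  θs : Fin (d+1) → K
  θ_inj : Function.Injective θ
  θs_inj : Function.Injective θs
  E_ne : ∀ i, E i ≠ 0
  Es_ne : ∀ i, Es i ≠ 0
  E_mul : ∀ i j, E i * E j = if i = j then E i else 0
  Es_mul : ∀ i j, Es i * Es j = if i = j then Es i else 0
  E_sum : ∑ i, E i = 1
  Es_sum : ∑ i, Es i = 1
  A_eq : A = ∑ i, θ i • E i
  As_eq : As = ∑ i, θs i • Es i
  EAsE_zero : ∀ i j : Fin (d+1), ((i:ℕ) + 1 < j ∨ (j:ℕ) + 1 < i) → E i * As * E j = 0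
  EAsE_ne : ∀ i j : Fin (d+1), ((i:ℕ) + 1 = j ∨ (j:ℕ) + 1 = i) → E i * As * E j ≠ 0
  EsAEs_zero : ∀ i j : Fin (d+1), ((i:ℕ) + 1 < j ∨ (j:ℕ) + 1 < i) → Es i * A * Es j = 0
  EsAEs_ne : ∀ i j : Fin (d+1), ((i:ℕ) + 1 = j ∨ (j:ℕ) + 1 = i) → Es i * A * Es j ≠ 0

/-- A Leonard pair in `Mat_{d+1}(K)`. -/
structure LeonardPair (K : Type*) [Field K] (d : ℕ) where
  A : Matrix (Fin (d+1)) (Fin (d+1)) K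
  As : Matrix (Fin (d+1)) (Fin (d+1)) K
  cond1 : ∃ P : Matrix (Fin (d+1)) (Fin (d+1)) K, IsUnit P ∧
    IsIrredTridiag (P⁻¹ * A * P) ∧ (P⁻¹ * As * P).IsDiag
  cond2 : ∃ P : Matrix (Fin (d+1)) (Fin (d+1)) K, IsUnit P ∧
    (P⁻¹ * A * P).IsDiag ∧ IsIrredTridiag (P⁻¹ * As * P)

section Aux
variable {K : Type*} [Field K] {d : ℕ}

lemma exists_mulVec_ne_zero {M : Matrix (Fin (d+1)) (Fin (d+1)) K} (hM : M ≠ 0) :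
    ∃ y, M *ᵥ y ≠ 0 := by
  by_contra h
  push_neg at h
  apply hM
  ext j i
  have := congrFun (h (Pi.single i 1)) j
  simpa using this

lemma sum_mulVec' {ι : Type*} (s : Finset ι) (f : ι → Matrix (Fin (d+1)) (Fin (d+1)) K)
    (u : Fin (d+1) → K) : (∑ i ∈ s, f i) *ᵥ u = ∑ i ∈ s, f i *ᵥ u := by
  ext j
  simp only [mulVec, dotProduct, Finset.sum_apply, Matrix.sum_apply, Finset.sum_mul]
  rw [Finset.sum_comm]

lemma mulVec_sum' {ι : Type*} (s : Finset ι) (M : Matrix (Fin (d+1)) (Fin (d+1)) K)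
    (f : ι → Fin (d+1) → K) : M *ᵥ (∑ i ∈ s, f i) = ∑ i ∈ s, M *ᵥ f i := by
  ext j
  simp only [mulVec, dotProduct, Finset.sum_apply, Finset.mul_sum]
  rw [Finset.sum_comm]

lemma rankOne (E : Fin (d+1) → Matrix (Fin (d+1)) (Fin (d+1)) K)
    (hne : ∀ i, E i ≠ 0) (hmul : ∀ i j, E i * E j = if i = j then E i else 0)
    (j : Fin (d+1)) (w : Fin (d+1) → K) (hw : E j *ᵥ w = w) (hw0 : w ≠ 0)
    (y : Fin (d+1) → K) : ∃ c : K, E j *ᵥ y = c • w := by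
  classical
  have hz : ∀ i, ∃ z, E i *ᵥ z ≠ 0 := fun i => exists_mulVec_ne_zero (hne i)
  choose z hz using hz
  set x : Fin (d+1) → (Fin (d+1) → K) := fun i => if i = j then w else E i *ᵥ z i with hx
  have key : ∀ (m i : Fin (d+1)) (v : Fin (d+1) → K),
      E m *ᵥ (E i *ᵥ v) = if m = i then E i *ᵥ v else 0 := by
    intro m i v
    rw [mulVec_mulVec, hmul m i]
    by_cases h : m = i <;> simp [h]
  have hEx : ∀ m i, E m *ᵥ x i = if m = i then x i else 0 := by
    intro m i
    by_cases h : i = j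
    · subst h
      have := key m i w
      rw [hw] at this
      simpa [hx] using this
    · simpa [hx, h] using key m i (z i)
  have hx_ne : ∀ i, x i ≠ 0 := by
    intro i
    by_cases h : i = j
    · simp [hx, h, hw0]
    · simp [hx, h, hz i]
  have hli : LinearIndependent K x := by
    rw [Fintype.linearIndependent_iff]
    intro g hg m
    have h0 : E m *ᵥ (∑ i, g i • x i) = g m • x m := by
      rw [mulVec_sum']
      simp only [mulVec_smul, hEx]
      simp
    rw [hg, mulVec_zero] at h0
    rcases smul_eq_zero.mp h0.symm with h | h
    · exact h
    · exact absurd h (hx_ne m)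
  have hsp : Submodule.span K (Set.range x) = ⊤ :=
    hli.span_eq_top_of_card_eq_finrank (by simp)
  have hy : y ∈ Submodule.span K (Set.range x) := hsp ▸ Submodule.mem_top
  rw [Submodule.mem_span_range_iff_exists_fun] at hy
  obtain ⟨c, hc⟩ := hy
  refine ⟨c j, ?_⟩
  rw [← hc, mulVec_sum']
  simp only [mulVec_smul, hEx]
  simp [hx]

end Aux

def Pmat {K : Type*} [Field K] {d : ℕ} (L : LeonardSystem K d) :
    ℕ → Matrix (Fin (d+1)) (Fin (d+1)) K
  | 0 => 1
  | k+1 => (L.A - natIdx L.θ (k+1) • 1) * Pmat L k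

theorem stmt15 {K : Type*} [Field K] {d : ℕ} (L : LeonardSystem K d)
    (u : Fin (d+1) → K) (hu : L.E 0 *ᵥ u = u) (hu0 : u ≠ 0)
    (B : Matrix (Fin (d+1)) (Fin (d+1)) K)
    (hB : ∀ j : Fin (d+1), L.A *ᵥ (L.Es j *ᵥ u) = ∑ i, B i j • (L.Es i *ᵥ u))
    (ν : K) (hν : ν = (Matrix.trace (L.E 0 * L.Es 0))⁻¹) :
    ∏ i ∈ Finset.Icc 1 d, (L.θ 0 - natIdx L.θ i) =
      ν * ∏ i ∈ Finset.Icc 1 d, mentry B i (i-1) := by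
  classical
  set v : Fin (d+1) → (Fin (d+1) → K) := fun i => L.Es i *ᵥ u with hv
  have hEsv : ∀ j i : Fin (d+1), L.Es j *ᵥ v i = if j = i then v i else 0 := by
    intro j i
    rw [hv]
    show L.Es j *ᵥ (L.Es i *ᵥ u) = _
    rw [mulVec_mulVec, L.Es_mul]
    by_cases h : j = i <;> simp [h]
  have hsumv : ∑ i, v i = u := by
    rw [hv, ← sum_mulVec', L.Es_sum, one_mulVec]
  -- rank one applications for Es
  have hrank : ∀ (m : Fin (d+1)), v m ≠ 0 → ∀ y, ∃ c : K, L.Es m *ᵥ y = c • v m := by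
    intro m hm y
    refine rankOne L.Es L.Es_ne L.Es_mul m (v m) ?_ hm y
    rw [hEsv m m]
    simp
  -- action of A on the v’s, componentwise
  have hEsAv : ∀ b a : Fin (d+1), L.Es b *ᵥ (L.A *ᵥ v a) = B b a • v b := by
    intro b a
    rw [show L.A *ᵥ v a = ∑ i, B i a • v i from hB a, mulVec_sum']
    simp only [mulVec_smul, hEsv]
    simp
  -- transfer of nonvanishing
  have hstep : ∀ a b : Fin (d+1), v a ≠ 0 → L.Es b * L.A * L.Es a ≠ 0 → B b a • v b ≠ 0 := by
    intro a b hva hX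
    obtain ⟨y, hy⟩ := exists_mulVec_ne_zero hX
    obtain ⟨c, hc⟩ := hrank a hva y
    have h1 : (L.Es b * L.A * L.Es a) *ᵥ y = c • (B b a • v b) := by
      rw [← mulVec_mulVec, ← mulVec_mulVec, hc, mulVec_smul, mulVec_smul, hEsAv]
    intro h0
    rw [h0, smul_zero] at h1
    exact hy h1
  -- all the v m are nonzero
  have hv0 : v 0 ≠ 0 := by
    have hvm : ∃ m : Fin (d+1), v m ≠ 0 := by
      by_contra h
      push_neg at h
      apply hu0
      rw [← hsumv]
      simp [h]
    have hdown : ∀ m : ℕ, ∀ hm : m < d + 1, v ⟨m, hm⟩ ≠ 0 → v 0 ≠ 0 := by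
      intro m
      induction m with
      | zero => intro hm h; simpa using h
      | succ k ih =>
        intro hm h
        have hk : k < d + 1 := Nat.lt_of_succ_lt hm
        have hX : L.Es ⟨k, hk⟩ * L.A * L.Es ⟨k+1, hm⟩ ≠ 0 :=
          L.EsAEs_ne _ _ (Or.inl (by simp))
        have h2 := hstep _ _ h hX
        exact ih hk (fun h0 => h2 (by rw [h0, smul_zero]))
    obtain ⟨m, hm⟩ := hvm
    exact hdown m.1 m.2 (by rw [Fin.eta]; exact hm)
  have hvall : ∀ m : ℕ, ∀ hm : m < d + 1, v ⟨m, hm⟩ ≠ 0 := by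
    intro m
    induction m with
    | zero => intro hm; simpa using hv0
    | succ k ih =>
      intro hm
      have hk : k < d + 1 := Nat.lt_of_succ_lt hm
      have hX : L.Es ⟨k+1, hm⟩ * L.A * L.Es ⟨k, hk⟩ ≠ 0 :=
        L.EsAEs_ne _ _ (Or.inr (by simp))
      have h2 := hstep _ _ (ih hk) hX
      exact fun h0 => h2 (by rw [h0, smul_zero])
  have hBne : ∀ k : ℕ, ∀ hk : k + 1 < d + 1,
      B ⟨k+1, hk⟩ ⟨k, Nat.lt_of_succ_lt hk⟩ ≠ 0 := by
    intro k hk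
    have hX : L.Es ⟨k+1, hk⟩ * L.A * L.Es ⟨k, Nat.lt_of_succ_lt hk⟩ ≠ 0 :=
      L.EsAEs_ne _ _ (Or.inr (by simp))
    have h2 := hstep _ _ (hvall k (Nat.lt_of_succ_lt hk)) hX
    intro h0
    exact h2 (by rw [h0, zero_smul])
  -- spectral decomposition of Pmat
  have hAE : ∀ j, L.A * L.E j = L.θ j • L.E j := by
    intro j
    rw [L.A_eq, Finset.sum_mul]
    simp only [smul_mul_assoc, L.E_mul]
    simp
  have hPspec : ∀ k, k ≤ d →
      Pmat L k = ∑ j, (∏ i ∈ Finset.Icc 1 k, (L.θ j - natIdx L.θ i)) • L.E j := by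
    intro k
    induction k with
    | zero => intro _; simp [Pmat, L.E_sum]
    | succ k ih =>
      intro hk
      have hk' : k ≤ d := Nat.le_of_succ_le hk
      rw [Pmat, ih hk', Finset.mul_sum]
      refine Finset.sum_congr rfl fun j _ => ?_
      rw [mul_smul_comm, sub_mul, hAE, smul_mul_assoc, one_mul,
        Finset.prod_Icc_succ_top (Nat.le_add_left 1 k), ← sub_smul, smul_smul]
  set t := Matrix.trace (L.E 0 * L.Es 0) with ht
  -- Fact A : E 0 *ᵥ v 0 = t • u
  have hrankE : ∀ y, ∃ c : K, L.E 0 *ᵥ y = c • u := fun y =>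
    rankOne L.E L.E_ne L.E_mul 0 u hu hu0 y
  have hFactA : L.E 0 *ᵥ v 0 = t • u := by
    choose γ hγ using fun i : Fin (d+1) => hrankE (L.Es 0 *ᵥ Pi.single i 1)
    have hN : ∀ j i, (L.E 0 * L.Es 0) j i = γ i * u j := by
      intro j i
      have h1 := congrFun (hγ i) j
      rw [mulVec_mulVec] at h1
      simpa using h1
    have htr : t = ∑ i, γ i * u i := by
      rw [ht, Matrix.trace]
      exact Finset.sum_congr rfl fun i _ => hN i i
    have : L.E 0 *ᵥ v 0 = (L.E 0 * L.Es 0) *ᵥ u := by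
      rw [hv]; show L.E 0 *ᵥ (L.Es 0 *ᵥ u) = _; rw [mulVec_mulVec]
    rw [this]
    ext j
    simp only [mulVec, dotProduct, Pi.smul_apply, smul_eq_mul, htr, Finset.sum_mul]
    exact Finset.sum_congr rfl fun i _ => by rw [hN]; ring
  -- components of Pmat L k *ᵥ v 0
  have hS : ∀ k : ℕ, ∀ hk : k < d + 1,
      (∀ j : Fin (d+1), k < (j:ℕ) → L.Es j *ᵥ (Pmat L k *ᵥ v 0) = 0) ∧
      L.Es ⟨k, hk⟩ *ᵥ (Pmat L k *ᵥ v 0) =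
        (∏ i ∈ Finset.Icc 1 k, mentry B i (i-1)) • v ⟨k, hk⟩ := by
    intro k
    induction k with
    | zero =>
      intro hk
      constructor
      · intro j hj
        rw [Pmat, one_mulVec, hEsv, if_neg]
        intro h
        rw [h] at hj
        simp at hj
      · rw [Pmat, one_mulVec, hEsv]
        simp
    | succ k ih =>
      intro hk1
      have hk : k < d + 1 := Nat.lt_of_succ_lt hk1
      obtain ⟨ih1, ih2⟩ := ih hk
      set w : Fin (d+1) → K := Pmat L k *ᵥ v 0 with hw
      have hP1 : Pmat L (k+1) *ᵥ v 0 = (L.A - natIdx L.θ (k+1) • 1) *ᵥ w := by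
        rw [Pmat, ← mulVec_mulVec, hw]
      have hdecomp : w = ∑ m, L.Es m *ᵥ w := by
        conv_lhs => rw [← one_mulVec w, ← L.Es_sum, sum_mulVec']
      have hAw : L.A *ᵥ w = ∑ m, L.A *ᵥ (L.Es m *ᵥ w) := by
        conv_lhs => rw [hdecomp]
        rw [mulVec_sum']
      have hEsAw : ∀ j : Fin (d+1), L.Es j *ᵥ (L.A *ᵥ w) =
          ∑ m, (L.Es j * L.A * L.Es m) *ᵥ w := by
        intro j
        rw [hAw, mulVec_sum']
        refine Finset.sum_congr rfl fun m _ => ?_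
        rw [mulVec_mulVec, mulVec_mulVec]
      have hPj : ∀ j : Fin (d+1), L.Es j *ᵥ (Pmat L (k+1) *ᵥ v 0)
          = (∑ m, (L.Es j * L.A * L.Es m) *ᵥ w) - natIdx L.θ (k+1) • (L.Es j *ᵥ w) := by
        intro j
        rw [hP1, sub_mulVec, smul_mulVec, one_mulVec, mulVec_sub, mulVec_smul, hEsAw j]
      constructor
      · intro j hj
        rw [hPj j, ih1 j (Nat.lt_of_succ_lt hj), smul_zero, sub_zero]
        refine Finset.sum_eq_zero fun m _ => ?_
        rcases le_or_gt (m:ℕ) k with hm | hm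
        · rw [L.EsAEs_zero j m (Or.inr (Nat.lt_of_le_of_lt (Nat.succ_le_succ hm) hj)),
            zero_mulVec]
        · rw [← mulVec_mulVec, ih1 m hm, mulVec_zero]
      · rw [hPj ⟨k+1, hk1⟩, ih1 ⟨k+1, hk1⟩ (by simp), smul_zero, sub_zero]
        have hsingle : (∑ m, (L.Es ⟨k+1,hk1⟩ * L.A * L.Es m) *ᵥ w)
            = (L.Es ⟨k+1,hk1⟩ * L.A * L.Es ⟨k,hk⟩) *ᵥ w := by
          refine Fintype.sum_eq_single _ fun m hm => ?_
          rcases lt_trichotomy (m:ℕ) k with h | h | h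
          · rw [L.EsAEs_zero _ _ (Or.inr (by simpa using Nat.succ_lt_succ h)), zero_mulVec]
          · exact absurd (Fin.ext (by simpa using h)) hm
          · rw [← mulVec_mulVec, ih1 m h, mulVec_zero]
        rw [hsingle, ← mulVec_mulVec, ih2, mulVec_smul, ← mulVec_mulVec,
          hEsAv ⟨k+1, hk1⟩ ⟨k, hk⟩,
          Finset.prod_Icc_succ_top (Nat.le_add_left 1 k)]
        have hment : mentry B (k+1) (k+1-1) = B ⟨k+1, hk1⟩ ⟨k, hk⟩ := by
          simp only [Nat.add_sub_cancel]
          unfold mentry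
          rw [dif_pos (⟨hk1, hk⟩ : k + 1 < d + 1 ∧ k < d + 1)]
        rw [hment, smul_smul]
  -- spectral value of Pmat L d
  set cθ := ∏ i ∈ Finset.Icc 1 d, (L.θ 0 - natIdx L.θ i) with hcθ
  have hPd : Pmat L d = cθ • L.E 0 := by
    rw [hPspec d le_rfl]
    have hz : ∀ j : Fin (d+1), j ≠ 0 →
        (∏ i ∈ Finset.Icc 1 d, (L.θ j - natIdx L.θ i)) • L.E j = 0 := by
      intro j hj
      have hj1 : 1 ≤ (j:ℕ) := Nat.one_le_iff_ne_zero.mpr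
        (fun h => hj (Fin.ext (by simp [h])))
      have hjd : (j:ℕ) ≤ d := Nat.lt_succ_iff.mp j.isLt
      rw [Finset.prod_eq_zero (Finset.mem_Icc.mpr ⟨hj1, hjd⟩), zero_smul]
      rw [natIdx, dif_pos j.isLt, Fin.eta, sub_self]
    rw [Fintype.sum_eq_single (0 : Fin (d+1)) hz, hcθ]
  -- final assembly
  obtain ⟨-, hSd⟩ := hS d (Nat.lt_succ_self d)
  have h1 : Pmat L d *ᵥ v 0 = (cθ * t) • u := by
    rw [hPd, smul_mulVec, hFactA, smul_smul]
  rw [h1, mulVec_smul] at hSd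
  have hvd_eq : L.Es ⟨d, Nat.lt_succ_self d⟩ *ᵥ u = v ⟨d, Nat.lt_succ_self d⟩ := rfl
  rw [hvd_eq] at hSd
  have heq : (∏ i ∈ Finset.Icc 1 d, mentry B i (i-1)) = cθ * t := by
    have h4 : ((∏ i ∈ Finset.Icc 1 d, mentry B i (i-1)) - cθ * t)
        • v ⟨d, Nat.lt_succ_self d⟩ = 0 := by
      rw [sub_smul, hSd, sub_self]
    rcases smul_eq_zero.mp h4 with h | h
    · exact sub_eq_zero.mp h
    · exact absurd h (hvall d (Nat.lt_succ_self d))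
  have hpi0 : (∏ i ∈ Finset.Icc 1 d, mentry B i (i-1)) ≠ 0 := by
    rw [Finset.prod_ne_zero_iff]
    intro i hi
    rw [Finset.mem_Icc] at hi
    obtain ⟨m, rfl⟩ : ∃ m, i = m + 1 := ⟨i - 1, (Nat.succ_pred_eq_of_pos hi.1).symm⟩
    have hm1 : m + 1 < d + 1 := Nat.lt_succ_of_le (Finset.mem_Icc.mp
      (Finset.mem_Icc.mpr hi)).2
    have hment : mentry B (m+1) (m+1-1) = B ⟨m+1, hm1⟩ ⟨m, Nat.lt_of_succ_lt hm1⟩ := by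
      simp only [Nat.add_sub_cancel]
      unfold mentry
      rw [dif_pos (⟨hm1, Nat.lt_of_succ_lt hm1⟩ : m + 1 < d + 1 ∧ m < d + 1)]
    rw [hment]
    exact hBne m hm1
  have ht0 : t ≠ 0 := fun h => hpi0 (by rw [heq, h, mul_zero])
  rw [hν, heq, mul_comm cθ t, ← mul_assoc, inv_mul_cancel₀ ht0, one_mul]
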